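/- Let T and S be ω1-trees, let C ⊆ ω1 be a club, and let g : T↾C → S↾C be an order isomorphism. Then g preserves heights: for every t ∈ T↾C, the height of g(t) in S equals the height of t in T. -/

import Mathlib

noncomputable section

/-- The first uncountable ordinal ω₁. -/
def omega1 : Ordinal := (Cardinal.aleph 1).ord

/-- `ht` is the height function of the partial order `T`: the strict predecessors of every
element are well-ordered, and `ht t` is the order type of the set of strict predecessors. -/
def HeightFun (T : Type) [PartialOrder T] (ht : T → Ordinal) : Prop :=
  ∀ t : T, ∃ w : IsWellOrder {s : T // s < t} (· < ·),
    ht t = @Ordinal.type {s : T // s < t} (· < ·) w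

/-- The α-th level of `T`: the set of elements of height α. -/
def Level {T : Type} [PartialOrder T] (ht : T → Ordinal) (α : Ordinal) : Set T :=
  {t | ht t = α}

/-- `T` is an ω₁-tree (with height function `ht`): it has cardinality ℵ₁, the strict
predecessors of every element are well-ordered with order type `ht t`, every element has
countable height, and every level `T_α` (α < ω₁) is countable and nonempty. -/
def IsOmega1Tree (T : Type) [PartialOrder T] (ht : T → Ordinal) : Prop :=
  HeightFun T ht ∧
  Cardinal.mk T = Cardinal.aleph 1 ∧
  (∀ t : T, ht t < omega1) ∧
  (∀ α : Ordinal, α < omega1 → (Level ht α).Countable ∧ (Level ht α).Nonempty)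

/-- A branch of `T` is a downward closed chain. -/
def IsBranch {T : Type} [PartialOrder T] (b : Set T) : Prop :=
  IsChain (· ≤ ·) b ∧ ∀ s t : T, t ∈ b → s ≤ t → s ∈ b

/-- A cofinal branch of `T` is a branch meeting every level `T_α`, α < ω₁. -/
def IsCofinalBranch {T : Type} [PartialOrder T] (ht : T → Ordinal) (b : Set T) : Prop :=
  IsBranch b ∧ ∀ α : Ordinal, α < omega1 → ∃ t ∈ b, ht t = α

/-- The set of cofinal branches of `T`. -/
def CofinalBranches (T : Type) [PartialOrder T] (ht : T → Ordinal) : Set (Set T) :=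
  {b | IsCofinalBranch ht b}

/-- The set of cofinal branches of `T` passing through `x`; this set is in natural bijection
with the set of cofinal branches of the cone `T_x`. -/
def BranchesThrough {T : Type} [PartialOrder T] (ht : T → Ordinal) (x : T) : Set (Set T) :=
  {b | IsCofinalBranch ht b ∧ x ∈ b}

/-- A Kurepa tree is an ω₁-tree with at least ℵ₂ cofinal branches. -/
def IsKurepaTree (T : Type) [PartialOrder T] (ht : T → Ordinal) : Prop :=
  IsOmega1Tree T ht ∧ Cardinal.aleph 2 ≤ Cardinal.mk ↥(CofinalBranches T ht)

/-- `T` is everywhere Kurepa: it is an ω₁-tree and for every `x ∈ T` the cone `T_x` has at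
least ℵ₂ cofinal branches, i.e. at least ℵ₂ cofinal branches of `T` pass through `x`. -/
def IsEverywhereKurepa (T : Type) [PartialOrder T] (ht : T → Ordinal) : Prop :=
  IsOmega1Tree T ht ∧ ∀ x : T, Cardinal.aleph 2 ≤ Cardinal.mk ↥(BranchesThrough ht x)

/-- `C` is a club (closed unbounded subset) of ω₁. -/
def IsClub' (C : Set Ordinal) : Prop :=
  (∀ α ∈ C, α < omega1) ∧
  (∀ α < omega1, ∃ β ∈ C, α ≤ β) ∧
  (∀ α < omega1, Order.IsSuccLimit α → (∀ β < α, ∃ γ ∈ C, β < γ ∧ γ < α) → α ∈ C)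

/-- `T↾A`: the set of elements of `T` whose height lies in `A`. -/
def Restrict (T : Type) [PartialOrder T] (ht : T → Ordinal) (A : Set Ordinal) : Set T :=
  {t | ht t ∈ A}

/-- `T` and `S` are club isomorphic: there is a club `C ⊆ ω₁` such that `T↾C` and `S↾C`
(with the induced orders) are order isomorphic. -/
def ClubIsomorphic (T : Type) [PartialOrder T] (htT : T → Ordinal)
    (S : Type) [PartialOrder S] (htS : S → Ordinal) : Prop :=
  ∃ C : Set Ordinal, IsClub C ∧
    Nonempty (↥(Restrict T htT C) ≃o ↥(Restrict S htS C))


section Aux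
variable {T : Type} [PartialOrder T] {ht : T → Ordinal}

lemma ht_eq_typein (h : HeightFun T ht) (t : T)
    (w : IsWellOrder {s : T // s < t} (· < ·)) (s : {s : T // s < t}) :
    ht s.1 = @Ordinal.typein {s : T // s < t} (· < ·) w s := by
  obtain ⟨w', hw'⟩ := h s.1
  rw [hw', ← @Ordinal.type_subrel _ _ w s]
  refine (@Ordinal.type_eq _ _ _ _ w' _).2 ⟨?_⟩
  refine RelIso.mk (Equiv.mk
    (fun r => ⟨⟨r.1, lt_trans r.2 s.2⟩, show (⟨r.1, _⟩ : {s : T // s < t}) < s from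
      Subtype.coe_lt_coe.1 r.2⟩)
    (fun b => ⟨b.1.1, Subtype.coe_lt_coe.2 b.2⟩) ?_ ?_) ?_
  · intro r; rfl
  · intro b; rfl
  · intro a b
    rw [subrel_val]
    exact Iff.trans Subtype.mk_lt_mk Subtype.coe_lt_coe

lemma height_lt (h : HeightFun T ht) {s t : T} (hst : s < t) : ht s < ht t := by
  obtain ⟨w, hw⟩ := h t
  rw [hw, ht_eq_typein h t w ⟨s, hst⟩]
  exact Ordinal.typein_lt_type _ _

lemma pred_trichot (h : HeightFun T ht) {s₁ s₂ t : T} (h1 : s₁ < t) (h2 : s₂ < t) :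
    s₁ < s₂ ∨ s₁ = s₂ ∨ s₂ < s₁ := by
  obtain ⟨w, -⟩ := h t
  rcases (haveI := w; trichotomous (r := fun a b : {s : T // s < t} => a < b) ⟨s₁, h1⟩ ⟨s₂, h2⟩) with h | h | h
  · exact Or.inl h
  · exact Or.inr (Or.inl (congrArg Subtype.val h))
  · exact Or.inr (Or.inr h)

lemma lt_of_height_lt (h : HeightFun T ht) {s₁ s₂ t : T} (h1 : s₁ < t) (h2 : s₂ < t)
    (hh : ht s₁ < ht s₂) : s₁ < s₂ := by
  rcases pred_trichot h h1 h2 with h' | h' | h'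
  · exact h'
  · exact absurd hh (by rw [h']; exact lt_irrefl _)
  · exact absurd (lt_trans hh (height_lt h h')) (lt_irrefl _)

lemma exists_height (h : HeightFun T ht) {t : T} {β : Ordinal} (hb : β < ht t) :
    ∃ s, s < t ∧ ht s = β := by
  obtain ⟨w, hw⟩ := h t
  rw [hw] at hb
  obtain ⟨a, ha⟩ := Ordinal.typein_surj (· < ·) hb
  exact ⟨a.1, a.2, by rw [ht_eq_typein h t w a, ha]⟩

def pred_iso (h : HeightFun T ht) (C : Set Ordinal) (t : ↥(Restrict T ht C)) :
    ((· < ·) : {s : ↥(Restrict T ht C) // s < t} → {s : ↥(Restrict T ht C) // s < t} → Prop) ≃r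
      Subrel ((· < ·) : ↥C → ↥C → Prop) {b : ↥C | b < ⟨ht t.1, t.2⟩} := by
  refine RelIso.mk (Equiv.ofBijective
    (fun s => ⟨⟨ht s.1.1, s.1.2⟩, show (⟨ht s.1.1, s.1.2⟩ : ↥C) < ⟨ht t.1, t.2⟩ from
      Subtype.mk_lt_mk.2 (height_lt h (Subtype.coe_lt_coe.2 s.2))⟩) ⟨?_, ?_⟩) ?_
  · intro s₁ s₂ hs
    have hh : ht s₁.1.1 = ht s₂.1.1 := congrArg (fun x => x.1.1) hs
    have h1 : s₁.1.1 < t.1 := Subtype.coe_lt_coe.2 s₁.2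
    have h2 : s₂.1.1 < t.1 := Subtype.coe_lt_coe.2 s₂.2
    apply Subtype.ext; apply Subtype.ext
    rcases pred_trichot h h1 h2 with h' | h' | h'
    · exact absurd (height_lt h h') (by rw [hh]; exact lt_irrefl _)
    · exact h'
    · exact absurd (height_lt h h') (by rw [hh]; exact lt_irrefl _)
  · intro c
    obtain ⟨x, hx, hht⟩ := exists_height h (show c.1.1 < ht t.1 from Subtype.coe_lt_coe.2 c.2)
    refine ⟨⟨⟨x, show ht x ∈ C from hht ▸ c.1.2⟩, Subtype.coe_lt_coe.1 hx⟩, ?_⟩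
    apply Subtype.ext; apply Subtype.ext; exact hht
  · intro a b
    show ((_ : ↥C) < _) ↔ _
    constructor
    · intro h'
      have := lt_of_height_lt h (Subtype.coe_lt_coe.2 a.2) (Subtype.coe_lt_coe.2 b.2)
        (Subtype.mk_lt_mk.1 h')
      exact Subtype.coe_lt_coe.1 (Subtype.coe_lt_coe.1 this)
    · intro h'
      exact Subtype.mk_lt_mk.2 (height_lt h
        (Subtype.coe_lt_coe.2 (Subtype.coe_lt_coe.2 h')))

end Aux

/-- an order isomorphism `g : T↾C → S↾C` between restrictions of ω₁-trees to a
club `C` preserves heights: the height in `S` of `g t` equals the height in `T` of `t`. -/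
theorem club_restriction_iso_preserves_height
    (T : Type) [PartialOrder T] (htT : T → Ordinal)
    (S : Type) [PartialOrder S] (htS : S → Ordinal)
    (hT : IsOmega1Tree T htT) (hS : IsOmega1Tree S htS)
    (C : Set Ordinal) (hC : IsClub' C)
    (g : ↥(Restrict T htT C) ≃o ↥(Restrict S htS C)) :
    ∀ t : ↥(Restrict T htT C), htS ↑(g t) = htT ↑t := by
  intro t
  have hHT := hT.1
  have hHS := hS.1
  have e1 := pred_iso hHT C t
  have e2 := pred_iso hHS C (g t)
  have eg : ((· < ·) : {s : ↥(Restrict T htT C) // s < t} →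
        {s : ↥(Restrict T htT C) // s < t} → Prop) ≃r
      ((· < ·) : {s : ↥(Restrict S htS C) // s < g t} →
        {s : ↥(Restrict S htS C) // s < g t} → Prop) := by
    refine RelIso.mk (Equiv.subtypeEquiv g.toEquiv (fun a => ?_)) ?_
    · exact g.lt_iff_lt.symm
    · intro a b
      constructor
      · intro h'
        exact Subtype.coe_lt_coe.1 (g.lt_iff_lt.1 (Subtype.coe_lt_coe.2 h'))
      · intro h'
        exact Subtype.coe_lt_coe.1 (g.lt_iff_lt.2 (Subtype.coe_lt_coe.2 h'))
  have key : (⟨htT t.1, t.2⟩ : ↥C) = ⟨htS (g t).1, (g t).2⟩ := by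
    apply Ordinal.typein_injective ((· < ·) : ↥C → ↥C → Prop)
    rw [← Ordinal.type_subrel, ← Ordinal.type_subrel]
    exact Ordinal.type_eq.2 ⟨(e1.symm.trans eg).trans e2⟩
  exact (congrArg Subtype.val key).symm
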